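/- The refined ε-Helmholtz decomposition holds: L²,q(Ω) = closure(rot R̊^{q-1}(Ω)) ⊕_ε εℋ^q(Ω) ⊕_ε closure(div D^{q+1}(Ω)), where εℋ^q(Ω) := R̊^q(Ω) ∩ ε⁻¹ ₀D^q(Ω) with rot-free and ε-divergence-free conditions (the ε-harmonic Dirichlet forms), all three summands being mutually orthogonal with respect to ⟨ε·,·⟩. -/

import Mathlib

/-!
STATEMENT 4 (refined ε-Helmholtz decomposition, abstract Hilbert space version per context):
`H` models `L²,q(Ω)`, `V` the closed subspace `closure (rot R̊^{q-1}(Ω))`,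
`W` the closed subspace `closure (div D^{q+1}(Ω))`; the hypothesis `hVW` is the
`L²`-orthogonality of the ranges of `rot` and `div` (coming from `rot ∘ rot = 0`,
`div ∘ div = 0` and partial integration).  The middle space
`𝓗 = {m | m ⊥ W ∧ ε m ∈ Vᗮ}` models the ε-harmonic Dirichlet forms
`εℋ^q(Ω) = ₀R̊^q(Ω) ∩ ε⁻¹ ₀D^q(Ω)`.  Conclusion: the three summands are mutually
orthogonal (in the weighted sense of the paper's `⊕_ε`) and every element of `H`
decomposes uniquely.
-/

open scoped InnerProductSpace

open scoped InnerProductSpace ComplexConjugate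

lemma exists_eps_proj
    {H : Type*} [NormedAddCommGroup H] [InnerProductSpace ℂ H] [CompleteSpace H]
    (ε : H ≃L[ℂ] H)
    (hsym : ∀ x y : H, ⟪(ε : H →L[ℂ] H) x, y⟫_ℂ = ⟪x, (ε : H →L[ℂ] H) y⟫_ℂ)
    (hpos : ∃ c > 0, ∀ x : H, c * ‖x‖ ^ 2 ≤ (⟪(ε : H →L[ℂ] H) x, x⟫_ℂ).re)
    (V : Submodule ℂ H) (hV : IsClosed (V : Set H)) (y : H) :
    ∃ v ∈ V, ∀ u ∈ V, ⟪(ε : H →L[ℂ] H) (y - v), u⟫_ℂ = 0 := by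
  letI : InnerProductSpace ℝ H := InnerProductSpace.complexToReal
  set A : H →L[ℂ] H := (ε : H →L[ℂ] H) with hA
  set V' : Submodule ℝ H := V.restrictScalars ℝ with hV'
  haveI : CompleteSpace V' := (show IsClosed ((V' : Set H)) from hV).completeSpace_coe
  have hre : ∀ x w : H, (⟪x, w⟫_ℝ : ℝ) = (⟪x, w⟫_ℂ).re := fun x w => rfl
  let B₀ : V' →ₗ[ℝ] V' →ₗ[ℝ] ℝ := LinearMap.mk₂ ℝ
    (fun u w => (⟪A (u : H), (w : H)⟫_ℂ).re)
    (by intro u u' w; simp [inner_add_left])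
    (by intro r u w
        have h1 : ((r • u : V') : H) = (r : ℂ) • (u : H) := rfl
        have h2 : A ((r : ℂ) • (u : H)) = (r : ℂ) • A (u : H) := map_smul A _ _
        show (⟪A ((r • u : V') : H), ((w : V') : H)⟫_ℂ).re
            = r • (⟪A ((u:V'):H), ((w:V'):H)⟫_ℂ).re
        rw [h1, h2, inner_smul_left]
        simp [Complex.mul_re])
    (by intro u w w'; simp [inner_add_right])
    (by intro r u w
        have h1 : ((r • w : V') : H) = (r : ℂ) • (w : H) := rfl
        show (⟪A ((u:V'):H), ((r • w : V') : H)⟫_ℂ).re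
            = r • (⟪A ((u:V'):H), ((w:V'):H)⟫_ℂ).re
        rw [h1, inner_smul_right]
        simp [Complex.mul_re])
  have hbound : ∀ u w : V', ‖B₀ u w‖ ≤ ‖A‖ * ‖u‖ * ‖w‖ := by
    intro u w
    calc ‖(⟪A (u : H), (w : H)⟫_ℂ).re‖ ≤ ‖⟪A (u : H), (w : H)⟫_ℂ‖ :=
            Complex.abs_re_le_norm _
      _ ≤ ‖A (u : H)‖ * ‖(w : H)‖ := norm_inner_le_norm _ _
      _ ≤ (‖A‖ * ‖(u : H)‖) * ‖(w : H)‖ :=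
            mul_le_mul_of_nonneg_right (A.le_opNorm _) (norm_nonneg _)
      _ = ‖A‖ * ‖u‖ * ‖w‖ := by rfl
  let B : V' →L[ℝ] V' →L[ℝ] ℝ := B₀.mkContinuous₂ ‖A‖ hbound
  have hBapp : ∀ u w : V', B u w = (⟪A (u : H), (w : H)⟫_ℂ).re := fun u w => rfl
  obtain ⟨c, hc, hco⟩ := hpos
  have coercive : IsCoercive B := by
    refine ⟨c, hc, fun u => ?_⟩
    have := hco (u : H)
    rw [hBapp]
    have hn : ‖u‖ = ‖(u : H)‖ := rfl
    calc c * ‖u‖ * ‖u‖ = c * ‖(u : H)‖ ^ 2 := by rw [hn]; ring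
      _ ≤ _ := hco (u : H)
  let g : V' →L[ℝ] ℝ := (innerSL ℝ (A y)).comp V'.subtypeL
  let f : V' := (InnerProductSpace.toDual ℝ V').symm g
  let v : V' := coercive.continuousLinearEquivOfBilin.symm f
  have hv : ∀ w : V', B v w = g w := by
    intro w
    rw [← coercive.continuousLinearEquivOfBilin_apply v w,
      coercive.continuousLinearEquivOfBilin.apply_symm_apply]
    exact InnerProductSpace.toDual_symm_apply
  have hre0 : ∀ u ∈ V, (⟪A (y - (v : H)), u⟫_ℂ).re = 0 := by
    intro u hu
    have h1 := hv ⟨u, hu⟩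
    rw [hBapp] at h1
    have h2 : g ⟨u, hu⟩ = (⟪A y, u⟫_ℂ).re := rfl
    rw [h2] at h1
    rw [map_sub, inner_sub_left]
    simp [Complex.sub_re, h1]
  refine ⟨(v : H), v.2, fun u hu => ?_⟩
  have h1 := hre0 u hu
  have h2 := hre0 (Complex.I • u) (V.smul_mem _ hu)
  rw [inner_smul_right] at h2
  simp only [Complex.mul_re, Complex.I_re, Complex.I_im] at h2
  apply Complex.ext
  · simpa using h1
  · simp [inner_sub_left] at h2 ⊢; linarith

open scoped InnerProductSpace

theorem refined_helmholtz_decomposition_eps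
    {H : Type*} [NormedAddCommGroup H] [InnerProductSpace ℂ H] [CompleteSpace H]
    (ε : H ≃L[ℂ] H)
    (hsym : ∀ x y : H, ⟪(ε : H →L[ℂ] H) x, y⟫_ℂ = ⟪x, (ε : H →L[ℂ] H) y⟫_ℂ)
    (hpos : ∃ c > 0, ∀ x : H, c * ‖x‖ ^ 2 ≤ (⟪(ε : H →L[ℂ] H) x, x⟫_ℂ).re)
    (V W : Submodule ℂ H) (hV : IsClosed (V : Set H)) (hW : IsClosed (W : Set H))
    (hVW : ∀ v ∈ V, ∀ w ∈ W, ⟪v, w⟫_ℂ = 0) :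
    -- the ε-harmonic subspace
    (∀ v ∈ V, ∀ m : H, ((∀ w ∈ W, ⟪w, m⟫_ℂ = 0) ∧ (ε : H →L[ℂ] H) m ∈ Vᗮ) →
        ⟪(ε : H →L[ℂ] H) m, v⟫_ℂ = 0) ∧
    (∀ m : H, ((∀ w ∈ W, ⟪w, m⟫_ℂ = 0) ∧ (ε : H →L[ℂ] H) m ∈ Vᗮ) →
        ∀ w ∈ W, ⟪m, w⟫_ℂ = 0) ∧
    (∀ v ∈ V, ∀ w ∈ W, ⟪v, w⟫_ℂ = 0) ∧
    (∀ x : H, ∃! p : H × H × H,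
      p.1 ∈ V ∧
      ((∀ w ∈ W, ⟪w, p.2.1⟫_ℂ = 0) ∧ (ε : H →L[ℂ] H) p.2.1 ∈ Vᗮ) ∧
      p.2.2 ∈ W ∧ x = p.1 + p.2.1 + p.2.2) := by
  
  obtain ⟨hc0, hco⟩ := id hpos  -- keep hpos
  clear hc0 hco
  set A : H →L[ℂ] H := (ε : H →L[ℂ] H) with hA
  obtain ⟨c, hc, hco⟩ := hpos
  -- part 1
  have P1 : ∀ v ∈ V, ∀ m : H, ((∀ w ∈ W, ⟪w, m⟫_ℂ = 0) ∧ A m ∈ Vᗮ) →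
      ⟪A m, v⟫_ℂ = 0 := by
    intro v hv m hm
    have := hm.2 v hv
    rwa [inner_eq_zero_symm] at this
  have P2 : ∀ m : H, ((∀ w ∈ W, ⟪w, m⟫_ℂ = 0) ∧ A m ∈ Vᗮ) →
      ∀ w ∈ W, ⟪m, w⟫_ℂ = 0 := by
    intro m hm w hw
    have := hm.1 w hw
    rwa [inner_eq_zero_symm] at this
  refine ⟨P1, P2, hVW, fun x => ?_⟩
  -- existence
  haveI : CompleteSpace W := hW.completeSpace_coe
  set w₀ : H := (W.orthogonalProjectionOnto x : H) with hw₀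
  have hw₀W : w₀ ∈ W := (W.orthogonalProjectionOnto x).2
  set y : H := x - w₀ with hy
  have hyW : y ∈ Wᗮ := Submodule.sub_starProjection_mem_orthogonal x
  obtain ⟨v, hvV, hvP⟩ := exists_eps_proj ε hsym ⟨c, hc, hco⟩ V hV y
  set m : H := y - v with hm
  have hmW : ∀ w ∈ W, ⟪w, m⟫_ℂ = 0 := by
    intro w hw
    have h1 : ⟪w, y⟫_ℂ = 0 := hyW w hw
    have h2 : ⟪w, v⟫_ℂ = 0 := by
      rw [inner_eq_zero_symm]; exact hVW v hvV w hw
    rw [hm, inner_sub_right, h1, h2, sub_zero]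
  have hmV : A m ∈ Vᗮ := by
    intro u hu
    rw [inner_eq_zero_symm]
    exact hvP u hu
  have hsum : x = v + m + w₀ := by rw [hm, hy]; abel
  refine ⟨(v, m, w₀), ⟨hvV, ⟨hmW, hmV⟩, hw₀W, hsum⟩, ?_⟩
  -- uniqueness
  rintro ⟨v', m', w'⟩ ⟨hv', ⟨hm'W, hm'V⟩, hw', hsum'⟩
  simp only at hv' hm'W hm'V hw' hsum' ⊢
  have key : ∀ a b cc : H, a ∈ V → (∀ w ∈ W, ⟪w, b⟫_ℂ = 0) → A b ∈ Vᗮ →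
      cc ∈ W → a + b + cc = 0 → a = 0 ∧ b = 0 ∧ cc = 0 := by
    intro a b cc haV hbW hbV hccW hzero
    have hcc : cc = 0 := by
      have h1 : ⟪cc, a⟫_ℂ = 0 := by
        rw [inner_eq_zero_symm]; exact hVW a haV cc hccW
      have h2 : ⟪cc, b⟫_ℂ = 0 := hbW cc hccW
      have h3 : ⟪cc, a + b + cc⟫_ℂ = ⟪cc, cc⟫_ℂ := by
        rw [inner_add_right, inner_add_right, h1, h2]; ring
      rw [hzero, inner_zero_right] at h3
      exact inner_self_eq_zero.mp h3.symm
    have hab : a + b = 0 := by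
      rw [hcc, add_zero] at hzero; exact hzero
    have hb : b = 0 := by
      have ha' : a = -b := eq_neg_of_add_eq_zero_left hab
      have h1 : ⟪a, A b⟫_ℂ = 0 := hbV a haV
      have h2 : ⟪A b, b⟫_ℂ = 0 := by
        have := hsym b a
        rw [ha'] at h1
        rw [inner_neg_left] at h1
        have h3 : ⟪b, A b⟫_ℂ = 0 := by
          have := neg_eq_zero.mp h1
          exact this
        rw [inner_eq_zero_symm] at h3
        exact h3
      have h4 := hco b
      rw [h2] at h4
      simp only [Complex.zero_re] at h4
      have h5 : ‖b‖ ^ 2 ≤ 0 := by nlinarith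
      have h6 : ‖b‖ = 0 := by nlinarith [norm_nonneg b, sq_nonneg ‖b‖]
      exact norm_eq_zero.mp h6
    have ha : a = 0 := by rw [hb, add_zero] at hab; exact hab
    exact ⟨ha, hb, hcc⟩
  have hzero : (v' - v) + (m' - m) + (w' - w₀) = 0 := by
    have h : v' + m' + w' = v + m + w₀ := by rw [← hsum', ← hsum]
    calc (v' - v) + (m' - m) + (w' - w₀) = (v' + m' + w') - (v + m + w₀) := by abel
      _ = 0 := sub_eq_zero.mpr h
  obtain ⟨ha, hb, hcc⟩ := key (v' - v) (m' - m) (w' - w₀)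
    (V.sub_mem hv' hvV)
    (fun w hw => by rw [inner_sub_right, hm'W w hw, hmW w hw, sub_zero])
    (by rw [map_sub]; exact Vᗮ.sub_mem hm'V hmV)
    (W.sub_mem hw' hw₀W) hzero
  refine Prod.ext ?_ (Prod.ext ?_ ?_)
  · exact sub_eq_zero.mp ha
  · exact sub_eq_zero.mp hb
  · exact sub_eq_zero.mp hcc
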